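/- Let k be a field, C a monoidal category, and Z : C ⥤ ModuleCat k a strong monoidal functor such that ⟨Z(f)⟩ ≠ 0 for every endomorphism f : 𝟙 ⟶ 𝟙 and every object X of C admits some morphism X ⟶ 𝟙. Then for every object X and every morphism M : 𝟙 ⟶ X the vector v_Z(M) ∈ Z(X) is nonzero; if moreover Z(X) is one-dimensional over k, then v_Z(M) spans Z(X). -/

import Mathlib

open CategoryTheory MonoidalCategory

universe v u

/-- The distinguished vector `ε_Z(1) ∈ Z(𝟙)` determined by the unit isomorphism
`ε_Z : k ≅ Z(𝟙)` of a (strong) monoidal functor `Z : C ⥤ ModuleCat k`. -/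
noncomputable def unitVec {k : Type*} [Field k] {C : Type u} [Category.{v} C]
    [MonoidalCategory C] (Z : C ⥤ ModuleCat k) [Z.Monoidal] : Z.obj (𝟙_ C) :=
  Functor.LaxMonoidal.ε Z (1 : k)

/-- `v_Z(M) := Z(M)(ε_Z(1)) ∈ Z(X)` for a morphism `M : 𝟙 ⟶ X`. -/
noncomputable def vec {k : Type*} [Field k] {C : Type u} [Category.{v} C]
    [MonoidalCategory C] (Z : C ⥤ ModuleCat k) [Z.Monoidal] {X : C} (M : 𝟙_ C ⟶ X) :
    Z.obj X :=
  Z.map M (unitVec Z)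

/-- If every scalar `⟨Z(f)⟩` (defined by `Z(f)(ε_Z(1)) = ⟨Z(f)⟩ • ε_Z(1)`) is nonzero and
every object admits a morphism to the unit, then every vector `v_Z(M)` is nonzero, and it
spans `Z(X)` whenever `Z(X)` is one-dimensional. -/
theorem vec_ne_zero_and_span {k : Type*} [Field k] {C : Type u} [Category.{v} C]
    [MonoidalCategory C] (Z : C ⥤ ModuleCat k) [Z.Monoidal]
    (hscalar : ∀ (f : 𝟙_ C ⟶ 𝟙_ C) (c : k),
      Z.map f (unitVec Z) = c • unitVec Z → c ≠ 0)
    (hout : ∀ X : C, Nonempty (X ⟶ 𝟙_ C)) :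
    ∀ (X : C) (M : 𝟙_ C ⟶ X),
      vec Z M ≠ 0 ∧
        (Module.finrank k (Z.obj X) = 1 → Submodule.span k {vec Z M} = ⊤) := by
  intro X M
  have hvne : vec Z M ≠ 0 := by
    intro hv
    obtain ⟨N⟩ := hout X
    set e := Functor.Monoidal.εIso Z
    set c : k := e.inv (Z.map (M ≫ N) (unitVec Z)) with hc
    have hhom : Z.map (M ≫ N) (unitVec Z) = c • unitVec Z := by
      have h1 : e.hom c = Z.map (M ≫ N) (unitVec Z) :=
        e.inv_hom_id_apply (Z.map (M ≫ N) (unitVec Z))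
      have h2 : e.hom c = c • unitVec Z := by
        have hcm : (c : ↑(𝟙_ (ModuleCat k))) = c • (1 : ↑(𝟙_ (ModuleCat k))) := by
          simp [smul_eq_mul]
        calc e.hom c = e.hom (c • (1 : ↑(𝟙_ (ModuleCat k)))) := by rw [← hcm]
          _ = c • e.hom (1 : ↑(𝟙_ (ModuleCat k))) := map_smul e.hom.hom c 1
          _ = c • unitVec Z := rfl
      rw [← h1, h2]
    have hc0 : c ≠ 0 := hscalar (M ≫ N) c hhom
    have : Z.map (M ≫ N) (unitVec Z) = 0 := by
      have : Z.map (M ≫ N) (unitVec Z) = Z.map N (Z.map M (unitVec Z)) := by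
        rw [Z.map_comp]; rfl
      rw [this]
      show Z.map N (vec Z M) = 0
      rw [hv, map_zero]
    rw [hhom] at this
    have hu : unitVec Z ≠ 0 := by
      intro h
      apply hscalar (𝟙 (𝟙_ C)) 0
      simp [h]
      rfl
    exact hu (by
      have := smul_eq_zero.mp this
      tauto)
  exact ⟨hvne, fun hfr => (finrank_eq_one_iff_of_nonzero (vec Z M) hvne).mp hfr⟩
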